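/- Let R > 0 and η ∈ (0,1) satisfy ηR > diam(K), let ξ ∈ ℝ^d, and let w : ℝ^d → ℝ be a measurable, ℤ^d-periodic, locally square-integrable function. Then ∬_{{(x,y) ∈ K × E : |x−y| < R}} ( w(x) − w(y) + ξ·(x−y) )² dx dy ≥ |K|² Σ_{{k ∈ ℤ^d : |k| < (1−η)R}} (ξ·k)². -/

import Mathlib

open MeasureTheory Filter Metric Set Pointwise
open scoped Topology ENNReal NNReal

noncomputable section

/-- The lattice point of `ℤ^d` inside `ℝ^d`. -/
def lat (d : ℕ) (k : Fin d → ℤ) : EuclideanSpace ℝ (Fin d) := WithLp.toLp 2 (fun i => (k i : ℝ))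

/-- The periodic set `E = ⋃_{k ∈ ℤ^d} (k + K)`. -/
def latSet (d : ℕ) (K : Set (EuclideanSpace ℝ (Fin d))) : Set (EuclideanSpace ℝ (Fin d)) :=
  ⋃ k : Fin d → ℤ, (lat d k +ᵥ K)

/-- `K` is compact, the closure of a bounded connected open set, with negligible boundary,
whose integer translates are pairwise disjoint. -/
def IsAdmissibleK (d : ℕ) (K : Set (EuclideanSpace ℝ (Fin d))) : Prop :=
  (∃ U : Set (EuclideanSpace ℝ (Fin d)),
      IsOpen U ∧ IsConnected U ∧ Bornology.IsBounded U ∧ K = closure U) ∧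
  MeasureTheory.volume (frontier K) = 0 ∧
  ∀ k : Fin d → ℤ, k ≠ 0 → Disjoint (lat d k +ᵥ K) K

/-- `φ` is a radial kernel with nonincreasing nonnegative profile `φ₀` and finite
second moment. -/
def IsKernel (d : ℕ) (φ : EuclideanSpace ℝ (Fin d) → ℝ) (φ₀ : ℝ → ℝ) : Prop :=
  (∀ t, 0 ≤ φ₀ t) ∧ AntitoneOn φ₀ (Set.Ici 0) ∧ (∀ ξ, φ ξ = φ₀ ‖ξ‖) ∧
  MeasureTheory.Integrable (fun ξ : EuclideanSpace ℝ (Fin d) => φ ξ * (1 + ‖ξ‖ ^ 2))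

/-- The nonlocal functional `F^φ_{δ,ε}`. -/
def Fphi (d : ℕ) (φ : EuclideanSpace ℝ (Fin d) → ℝ) (Ω K : Set (EuclideanSpace ℝ (Fin d)))
    (δ ε : ℝ) (u : EuclideanSpace ℝ (Fin d) → ℝ) : ℝ :=
  (ε ^ (d + 2))⁻¹ * ∫ x in Ω ∩ δ • latSet d K, ∫ y in Ω ∩ δ • latSet d K,
    φ (ε⁻¹ • (x - y)) * (u x - u y) ^ 2

/-- The nonlocal functional `F_{δ,ε}` with the truncation kernel `χ_{B₁}`. -/
def Fball (d : ℕ) (Ω K : Set (EuclideanSpace ℝ (Fin d))) (δ ε : ℝ)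
    (u : EuclideanSpace ℝ (Fin d) → ℝ) : ℝ :=
  (ε ^ (d + 2))⁻¹ *
    ∫ p in ((Ω ∩ δ • latSet d K) ×ˢ (Ω ∩ δ • latSet d K)) ∩
      {p : EuclideanSpace ℝ (Fin d) × EuclideanSpace ℝ (Fin d) | dist p.1 p.2 < ε},
      (u p.1 - u p.2) ^ 2

private lemma lat_sub' {d : ℕ} (k k' : Fin d → ℤ) : lat d (k - k') = lat d k - lat d k' := by
  ext i
  simp only [lat, PiLp.sub_apply, PiLp.toLp_apply, Pi.sub_apply]
  push_cast
  ring

private lemma abs_coord_le_norm {d : ℕ} (x : EuclideanSpace ℝ (Fin d)) (i : Fin d) :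
    |x i| ≤ ‖x‖ := by
  rw [EuclideanSpace.norm_eq]
  have h1 : |x i| = Real.sqrt (‖x i‖ ^ 2) := by
    rw [Real.sqrt_sq_eq_abs, abs_norm, Real.norm_eq_abs]
  rw [h1]
  exact Real.sqrt_le_sqrt (Finset.single_le_sum (f := fun j => ‖x j‖ ^ 2)
    (fun j _ => sq_nonneg _) (Finset.mem_univ i))

private lemma myJensen {α : Type*} [MeasurableSpace α] (μ : Measure α) [IsFiniteMeasure μ]
    (f : α → ℝ) (h1 : Integrable f μ) (h2 : Integrable (fun x => f x ^ 2) μ) :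
    (∫ x, f x ∂μ) ^ 2 ≤ (μ Set.univ).toReal * ∫ x, f x ^ 2 ∂μ := by
  rcases eq_or_lt_of_le (ENNReal.toReal_nonneg : (0:ℝ) ≤ (μ Set.univ).toReal) with hm | hm
  · have hμ : μ = 0 := by
      rcases (ENNReal.toReal_eq_zero_iff _).1 hm.symm with h | h
      · exact Measure.measure_univ_eq_zero.1 h
      · exact absurd h (measure_ne_top μ _)
    simp [hμ]
  · set m := (μ Set.univ).toReal with hm'
    set I := ∫ x, f x ∂μ with hI
    set c := I / m with hc
    have key : 0 ≤ ∫ x, (f x - c) ^ 2 ∂μ := integral_nonneg fun x => sq_nonneg _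
    have expand : ∫ x, (f x - c) ^ 2 ∂μ = (∫ x, f x ^ 2 ∂μ) - 2 * c * I + c ^ 2 * m := by
      have e : (fun x => (f x - c) ^ 2) = fun x => (f x ^ 2 - 2 * c * f x) + c ^ 2 := by
        funext x; ring
      have hA : Integrable (fun x => f x ^ 2 - 2 * c * f x) μ := h2.sub (h1.const_mul _)
      have hB : Integrable (fun x => 2 * c * f x) μ := h1.const_mul _
      rw [e, integral_add hA (integrable_const _),
        integral_sub h2 hB, MeasureTheory.integral_const_mul, integral_const, smul_eq_mul,
        measureReal_def, ← hI, ← hm']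
      ring
    rw [expand] at key
    have hcm : c * m = I := by rw [hc, div_mul_cancel₀ _ hm.ne']
    nlinarith [mul_nonneg hm.le key, hcm]

private lemma setIntegral_vadd_set {d : ℕ} {s : Set (EuclideanSpace ℝ (Fin d))}
    (hs : MeasurableSet s) (c : EuclideanSpace ℝ (Fin d)) (g : EuclideanSpace ℝ (Fin d) → ℝ) :
    ∫ y in c +ᵥ s, g y = ∫ y in s, g (c + y) := by
  rw [← integral_indicator (hs.const_vadd c), ← integral_indicator hs,
    ← integral_add_left_eq_self (Set.indicator (c +ᵥ s) g) c]
  congr 1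
  funext y
  by_cases hy : y ∈ s
  · rw [Set.indicator_of_mem hy]
    exact Set.indicator_of_mem (vadd_mem_vadd_set_iff.2 hy) g
  · rw [Set.indicator_of_notMem hy]
    exact Set.indicator_of_notMem (fun h => hy (vadd_mem_vadd_set_iff.1 h)) g

set_option maxHeartbeats 2000000 in
/-- double Jensen lower bound for periodic test functions. -/
theorem stmt_11 (d : ℕ) (hd : 1 ≤ d)
    (K : Set (EuclideanSpace ℝ (Fin d))) (hK : IsAdmissibleK d K)
    (R η : ℝ) (hR : 0 < R) (hη0 : 0 < η) (hη1 : η < 1)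
    (hdiam : Metric.diam K < η * R)
    (ξ : EuclideanSpace ℝ (Fin d))
    (w : EuclideanSpace ℝ (Fin d) → ℝ) (hwm : Measurable w)
    (hper : ∀ x : EuclideanSpace ℝ (Fin d), ∀ k : Fin d → ℤ, w (x + lat d k) = w x)
    (hloc : ∀ C : Set (EuclideanSpace ℝ (Fin d)), IsCompact C →
      IntegrableOn (fun x => (w x) ^ 2) C) :
    ((volume K).toReal) ^ 2 *
      ∑' k : {k : Fin d → ℤ // ‖lat d k‖ < (1 - η) * R},
        (inner ℝ ξ (lat d k.1) : ℝ) ^ 2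
    ≤ ∫ p in (K ×ˢ latSet d K) ∩
        {p : EuclideanSpace ℝ (Fin d) × EuclideanSpace ℝ (Fin d) | dist p.1 p.2 < R},
        (w p.1 - w p.2 + (inner ℝ ξ (p.1 - p.2) : ℝ)) ^ 2 := by
  classical
  obtain ⟨⟨U, hUo, hUc, hUb, hKU⟩, hfront, hdisj⟩ := hK
  have hKcomp : IsCompact K := by rw [hKU]; exact hUb.isCompact_closure
  have hKmeas : MeasurableSet K := hKcomp.isClosed.measurableSet
  set A := (K ×ˢ latSet d K) ∩
      {p : EuclideanSpace ℝ (Fin d) × EuclideanSpace ℝ (Fin d) | dist p.1 p.2 < R} with hAdef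
  by_cases hm0 : volume K = 0
  · rw [hm0]
    simp only [ENNReal.toReal_zero]
    rw [zero_pow (two_ne_zero), zero_mul]
    exact integral_nonneg fun p => sq_nonneg _
  -- main case
  have hmpos : 0 < (volume K).toReal := ENNReal.toReal_pos hm0 hKcomp.measure_lt_top.ne
  set m : ℝ := (volume K).toReal with hmdef
  obtain ⟨x₀, hx₀⟩ : K.Nonempty := nonempty_of_measure_ne_zero hm0
  obtain ⟨r, hrK⟩ := hKcomp.isBounded.subset_closedBall 0
  have hr0 : 0 ≤ r := by
    have := hrK hx₀
    rw [Metric.mem_closedBall] at this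
    exact le_trans dist_nonneg this
  set B := Metric.closedBall (0 : EuclideanSpace ℝ (Fin d)) (r + R) with hBdef
  have hBcomp : IsCompact B := isCompact_closedBall _ _
  have hBmeas : MeasurableSet B := hBcomp.isClosed.measurableSet
  have hKB : K ⊆ B := hrK.trans (Metric.closedBall_subset_closedBall (by linarith))
  haveI hfinK : IsFiniteMeasure (volume.restrict K) :=
    ⟨by rw [Measure.restrict_apply_univ]; exact hKcomp.measure_lt_top⟩
  haveI hfinB : IsFiniteMeasure (volume.restrict B) :=
    ⟨by rw [Measure.restrict_apply_univ]; exact hBcomp.measure_lt_top⟩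
  -- measurability
  have hinner : Continuous fun p : EuclideanSpace ℝ (Fin d) × EuclideanSpace ℝ (Fin d) =>
      (inner ℝ ξ (p.1 - p.2) : ℝ) :=
    continuous_const.inner (continuous_fst.sub continuous_snd)
  have hfmeas : Measurable fun p : EuclideanSpace ℝ (Fin d) × EuclideanSpace ℝ (Fin d) =>
      (w p.1 - w p.2 + (inner ℝ ξ (p.1 - p.2) : ℝ)) ^ 2 :=
    (((hwm.comp measurable_fst).sub (hwm.comp measurable_snd)).add hinner.measurable).pow_const 2
  -- product restriction identities
  have hprodKB : (volume : Measure (EuclideanSpace ℝ (Fin d) × EuclideanSpace ℝ (Fin d))).restrict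
      (K ×ˢ B) = (volume.restrict K).prod (volume.restrict B) := by
    rw [Measure.volume_eq_prod, Measure.prod_restrict]
  have hprodKK : (volume : Measure (EuclideanSpace ℝ (Fin d) × EuclideanSpace ℝ (Fin d))).restrict
      (K ×ˢ K) = (volume.restrict K).prod (volume.restrict K) := by
    rw [Measure.volume_eq_prod, Measure.prod_restrict]
  -- bound for the inner-product term
  set D : ℝ := ‖ξ‖ * (r + (r + R)) with hDdef
  have hDbound : ∀ p : EuclideanSpace ℝ (Fin d) × EuclideanSpace ℝ (Fin d),
      p.1 ∈ K → p.2 ∈ B → |(inner ℝ ξ (p.1 - p.2) : ℝ)| ≤ D := by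
    intro p hp1 hp2
    calc |(inner ℝ ξ (p.1 - p.2) : ℝ)| ≤ ‖ξ‖ * ‖p.1 - p.2‖ := abs_real_inner_le_norm _ _
      _ ≤ ‖ξ‖ * (r + (r + R)) := by
          gcongr
          calc ‖p.1 - p.2‖ ≤ ‖p.1‖ + ‖p.2‖ := norm_sub_le _ _
            _ ≤ r + (r + R) := by
                refine add_le_add ?_ (mem_closedBall_zero_iff.1 hp2)
                have := hrK hp1
                rwa [← mem_closedBall_zero_iff]
  -- integrability on K ×ˢ B
  have hfKB : IntegrableOn
      (fun p : EuclideanSpace ℝ (Fin d) × EuclideanSpace ℝ (Fin d) =>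
        (w p.1 - w p.2 + (inner ℝ ξ (p.1 - p.2) : ℝ)) ^ 2) (K ×ˢ B) := by
    have hg1 : Integrable (fun p : EuclideanSpace ℝ (Fin d) × EuclideanSpace ℝ (Fin d) =>
        (w p.1) ^ 2 * 1) ((volume.restrict K).prod (volume.restrict B)) :=
      (hloc K hKcomp).mul_prod (integrable_const 1)
    have hg2 : Integrable (fun p : EuclideanSpace ℝ (Fin d) × EuclideanSpace ℝ (Fin d) =>
        1 * (w p.2) ^ 2) ((volume.restrict K).prod (volume.restrict B)) :=
      (integrable_const 1).mul_prod (hloc B hBcomp)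
    have hgdom : Integrable (fun p : EuclideanSpace ℝ (Fin d) × EuclideanSpace ℝ (Fin d) =>
        3 * ((w p.1) ^ 2 * 1) + 3 * (1 * (w p.2) ^ 2) + 3 * D ^ 2)
        ((volume.restrict K).prod (volume.restrict B)) :=
      ((hg1.const_mul 3).add (hg2.const_mul 3)).add (integrable_const _)
    rw [IntegrableOn, hprodKB]
    refine Integrable.mono' hgdom hfmeas.aestronglyMeasurable ?_
    rw [← hprodKB]
    filter_upwards [ae_restrict_mem (hKmeas.prod hBmeas)] with p hp
    obtain ⟨hp1, hp2⟩ := hp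
    have h1 := hDbound p hp1 hp2
    have hD0 : 0 ≤ D := le_trans (abs_nonneg _) h1
    have hc2 : (inner ℝ ξ (p.1 - p.2) : ℝ) ^ 2 ≤ D ^ 2 := by
      rw [← sq_abs]
      exact pow_le_pow_left₀ (abs_nonneg _) h1 2
    rw [Real.norm_eq_abs, abs_of_nonneg (sq_nonneg _)]
    nlinarith [hc2, sq_nonneg (w p.1 + w p.2),
      sq_nonneg (w p.1 - (inner ℝ ξ (p.1 - p.2) : ℝ)),
      sq_nonneg (w p.2 + (inner ℝ ξ (p.1 - p.2) : ℝ))]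
  -- the finite set of lattice points
  set F : Set (Fin d → ℤ) := {k | ‖lat d k‖ < (1 - η) * R} with hFdef
  have hFfin : F.Finite := by
    have hsub : F ⊆ Set.pi Set.univ
        (fun _ : Fin d => (Set.Icc (-(max 1 ⌈(1 - η) * R⌉)) (max 1 ⌈(1 - η) * R⌉) : Set ℤ)) := by
      intro k hk
      rw [Set.mem_univ_pi]
      intro i
      have h1 : |(k i : ℝ)| ≤ ‖lat d k‖ := abs_coord_le_norm (lat d k) i
      have hk' : ‖lat d k‖ < (1 - η) * R := hk
      have h3 : |k i| ≤ max 1 ⌈(1 - η) * R⌉ := by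
        rw [← Int.cast_le (R := ℝ), Int.cast_abs, Int.cast_max, Int.cast_one]
        refine le_trans h1 (le_trans hk'.le (le_trans (Int.le_ceil _) ?_))
        exact le_max_right _ _
      exact Set.mem_Icc.2 (abs_le.1 h3)
    exact (Set.Finite.pi fun _ => Set.finite_Icc _ _).subset hsub
  haveI hFt : Fintype {k : Fin d → ℤ // ‖lat d k‖ < (1 - η) * R} := hFfin.fintype
  set t : Finset (Fin d → ℤ) := hFfin.toFinset with htdef
  have htsum : (∑' k : {k : Fin d → ℤ // ‖lat d k‖ < (1 - η) * R},
      (inner ℝ ξ (lat d k.1) : ℝ) ^ 2) = ∑ k ∈ t, (inner ℝ ξ (lat d k) : ℝ) ^ 2 := by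
    rw [tsum_fintype, ← Finset.sum_coe_sort t (fun k => (inner ℝ ξ (lat d k) : ℝ) ^ 2)]
    exact Fintype.sum_equiv
      (Equiv.subtypeEquivRight
        (p := fun k : Fin d → ℤ => ‖lat d k‖ < (1 - η) * R)
        (q := fun k : Fin d → ℤ => k ∈ t)
        (fun x => (hFfin.mem_toFinset (a := x)).symm))
      (fun k => (inner ℝ ξ (lat d k.1) : ℝ) ^ 2)
      (fun k => (inner ℝ ξ (lat d k.1) : ℝ) ^ 2) (fun k => rfl)
  -- each piece is inside A
  have hpiece_sub : ∀ k ∈ F, (K ×ˢ (lat d k +ᵥ K)) ⊆ A := by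
    rintro k hk p ⟨hp1, hp2⟩
    obtain ⟨y, hy, hyeq⟩ := hp2
    refine ⟨⟨hp1, Set.mem_iUnion.2 ⟨k, ⟨y, hy, hyeq⟩⟩⟩, ?_⟩
    show dist p.1 p.2 < R
    have h1 : dist p.1 p.2 ≤ dist p.1 y + dist y p.2 := dist_triangle _ _ _
    have hyeq' : lat d k + y = p.2 := hyeq
    have h2 : dist y p.2 = ‖lat d k‖ := by
      rw [← hyeq', dist_eq_norm, show y - (lat d k + y) = -(lat d k) by abel, norm_neg]
    have h3 : dist p.1 y ≤ Metric.diam K := Metric.dist_le_diam_of_mem hKcomp.isBounded hp1 hy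
    have h4 : ‖lat d k‖ < (1 - η) * R := hk
    have h5 : Metric.diam K < η * R := hdiam
    rw [h2] at h1
    nlinarith
  have hAKB : A ⊆ K ×ˢ B := by
    rintro p ⟨⟨hp1, _⟩, hpd⟩
    refine ⟨hp1, ?_⟩
    rw [hBdef, Metric.mem_closedBall]
    have h1 : dist p.1 p.2 < R := hpd
    have h2 : dist p.1 (0 : EuclideanSpace ℝ (Fin d)) ≤ r := Metric.mem_closedBall.1 (hrK hp1)
    have h3 : dist p.2 (0 : EuclideanSpace ℝ (Fin d)) ≤
        dist p.2 p.1 + dist p.1 (0 : EuclideanSpace ℝ (Fin d)) := dist_triangle _ _ _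
    rw [dist_comm p.2 p.1] at h3
    linarith
  have hfA : IntegrableOn
      (fun p : EuclideanSpace ℝ (Fin d) × EuclideanSpace ℝ (Fin d) =>
        (w p.1 - w p.2 + (inner ℝ ξ (p.1 - p.2) : ℝ)) ^ 2) A := hfKB.mono_set hAKB
  -- step 1: restrict to union of pieces
  have hSsubA : (⋃ k ∈ t, K ×ˢ (lat d k +ᵥ K)) ⊆ A :=
    Set.iUnion₂_subset fun k hk => hpiece_sub k (hFfin.mem_toFinset.1 hk)
  have step1 : (∫ p in ⋃ k ∈ t, K ×ˢ (lat d k +ᵥ K),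
        (w p.1 - w p.2 + (inner ℝ ξ (p.1 - p.2) : ℝ)) ^ 2)
      ≤ ∫ p in A, (w p.1 - w p.2 + (inner ℝ ξ (p.1 - p.2) : ℝ)) ^ 2 :=
    setIntegral_mono_set hfA (Eventually.of_forall fun p => sq_nonneg _)
      (HasSubset.Subset.eventuallyLE hSsubA)
  -- disjointness of translates
  have htrans : ∀ k k' : Fin d → ℤ, k ≠ k' → Disjoint (lat d k +ᵥ K) (lat d k' +ᵥ K) := by
    intro k k' hne
    rw [Set.disjoint_left]
    rintro a ⟨y, hy, hyeq⟩ ⟨z, hz, hzeq⟩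
    have hy2 : y ∈ lat d (k' - k) +ᵥ K := by
      refine ⟨z, hz, ?_⟩
      have hyeq' : lat d k + y = a := hyeq
      have hzeq' : lat d k' + z = a := hzeq
      have heq : lat d k + y = lat d k' + z := by rw [hyeq', hzeq']
      show lat d (k' - k) + z = y
      rw [lat_sub']
      calc lat d k' - lat d k + z = -lat d k + (lat d k' + z) := by abel
        _ = -lat d k + (lat d k + y) := by rw [← heq]
        _ = y := by abel
    exact Set.disjoint_left.1 (hdisj (k' - k) (sub_ne_zero.2 (Ne.symm hne))) hy2 hy
  have hpd : Set.Pairwise (t : Set (Fin d → ℤ))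
      (Function.onFun Disjoint fun k => K ×ˢ (lat d k +ᵥ K)) := by
    intro k _ k' _ hne
    simp only [Function.onFun]
    rw [Set.disjoint_left]
    rintro p ⟨_, hp2⟩ ⟨_, hq2⟩
    exact Set.disjoint_left.1 (htrans k k' hne) hp2 hq2
  have step2 : (∫ p in ⋃ k ∈ t, K ×ˢ (lat d k +ᵥ K),
        (w p.1 - w p.2 + (inner ℝ ξ (p.1 - p.2) : ℝ)) ^ 2)
      = ∑ k ∈ t, ∫ p in K ×ˢ (lat d k +ᵥ K),
        (w p.1 - w p.2 + (inner ℝ ξ (p.1 - p.2) : ℝ)) ^ 2 :=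
    integral_biUnion_finset t (fun k _ => hKmeas.prod (hKmeas.const_vadd _)) hpd
      (fun k hk => hfA.mono_set (hpiece_sub k (hFfin.mem_toFinset.1 hk)))
  -- integrability facts on K ×ˢ K
  have hKKsub : K ×ˢ K ⊆ K ×ˢ B := Set.prod_mono subset_rfl hKB
  have hfKK' : Integrable (fun p : EuclideanSpace ℝ (Fin d) × EuclideanSpace ℝ (Fin d) =>
      (w p.1 - w p.2 + (inner ℝ ξ (p.1 - p.2) : ℝ)) ^ 2)
      ((volume.restrict K).prod (volume.restrict K)) := by
    have := hfKB.mono_set hKKsub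
    rwa [IntegrableOn, hprodKK] at this
  have hgmeas : Measurable fun p : EuclideanSpace ℝ (Fin d) × EuclideanSpace ℝ (Fin d) =>
      w p.1 - w p.2 + (inner ℝ ξ (p.1 - p.2) : ℝ) :=
    ((hwm.comp measurable_fst).sub (hwm.comp measurable_snd)).add hinner.measurable
  have hg : Integrable (fun p : EuclideanSpace ℝ (Fin d) × EuclideanSpace ℝ (Fin d) =>
      w p.1 - w p.2 + (inner ℝ ξ (p.1 - p.2) : ℝ))
      ((volume.restrict K).prod (volume.restrict K)) := by
    have hbd : Integrable (fun p : EuclideanSpace ℝ (Fin d) × EuclideanSpace ℝ (Fin d) =>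
        1 + (w p.1 - w p.2 + (inner ℝ ξ (p.1 - p.2) : ℝ)) ^ 2)
        ((volume.restrict K).prod (volume.restrict K)) :=
      (integrable_const (1 : ℝ)).add hfKK'
    refine Integrable.mono' hbd
      hgmeas.aestronglyMeasurable (Eventually.of_forall fun p => ?_)
    rw [Real.norm_eq_abs]
    nlinarith [sq_nonneg (|w p.1 - w p.2 + (inner ℝ ξ (p.1 - p.2) : ℝ)| - 1),
      sq_abs (w p.1 - w p.2 + (inner ℝ ξ (p.1 - p.2) : ℝ))]
  -- mean zero
  have hwK : IntegrableOn w K := by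
    have hbd : Integrable (fun x : EuclideanSpace ℝ (Fin d) => 1 + w x ^ 2)
        (volume.restrict K) := (integrable_const (1 : ℝ)).add (hloc K hKcomp)
    refine Integrable.mono' hbd
      hwm.aestronglyMeasurable (Eventually.of_forall fun x => ?_)
    rw [Real.norm_eq_abs]
    nlinarith [sq_nonneg (|w x| - 1), sq_abs (w x)]
  have hinnK : IntegrableOn (fun x : EuclideanSpace ℝ (Fin d) => (inner ℝ ξ x : ℝ)) K :=
    (continuous_const.inner continuous_id).continuousOn.integrableOn_compact hKcomp
  have hmean : (∫ p, (w p.1 - w p.2 + (inner ℝ ξ (p.1 - p.2) : ℝ))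
      ∂((volume.restrict K).prod (volume.restrict K))) = 0 := by
    have hw1 : Integrable (fun p : EuclideanSpace ℝ (Fin d) × EuclideanSpace ℝ (Fin d) =>
        w p.1 * 1) ((volume.restrict K).prod (volume.restrict K)) :=
      hwK.mul_prod (integrable_const 1)
    have hw2 : Integrable (fun p : EuclideanSpace ℝ (Fin d) × EuclideanSpace ℝ (Fin d) =>
        1 * w p.2) ((volume.restrict K).prod (volume.restrict K)) :=
      (integrable_const 1).mul_prod hwK
    have hi1 : Integrable (fun p : EuclideanSpace ℝ (Fin d) × EuclideanSpace ℝ (Fin d) =>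
        (inner ℝ ξ p.1 : ℝ) * 1) ((volume.restrict K).prod (volume.restrict K)) :=
      hinnK.mul_prod (integrable_const 1)
    have hi2 : Integrable (fun p : EuclideanSpace ℝ (Fin d) × EuclideanSpace ℝ (Fin d) =>
        1 * (inner ℝ ξ p.2 : ℝ)) ((volume.restrict K).prod (volume.restrict K)) :=
      (integrable_const 1).mul_prod hinnK
    have he : (fun p : EuclideanSpace ℝ (Fin d) × EuclideanSpace ℝ (Fin d) =>
        w p.1 - w p.2 + (inner ℝ ξ (p.1 - p.2) : ℝ))
        = fun p => (w p.1 * 1 - 1 * w p.2) + ((inner ℝ ξ p.1 : ℝ) * 1 - 1 * (inner ℝ ξ p.2 : ℝ)) := by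
      funext p
      rw [inner_sub_right]
      ring
    have hA : Integrable (fun p : EuclideanSpace ℝ (Fin d) × EuclideanSpace ℝ (Fin d) =>
        w p.1 * 1 - 1 * w p.2) ((volume.restrict K).prod (volume.restrict K)) := hw1.sub hw2
    have hB : Integrable (fun p : EuclideanSpace ℝ (Fin d) × EuclideanSpace ℝ (Fin d) =>
        (inner ℝ ξ p.1 : ℝ) * 1 - 1 * (inner ℝ ξ p.2 : ℝ))
        ((volume.restrict K).prod (volume.restrict K)) := hi1.sub hi2
    have e1 : (∫ a : EuclideanSpace ℝ (Fin d) × EuclideanSpace ℝ (Fin d),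
        w a.1 * 1 ∂((volume.restrict K).prod (volume.restrict K)))
        = (∫ x in K, w x) * (∫ _y in K, (1 : ℝ)) := integral_prod_mul w (fun _ => (1 : ℝ))
    have e2 : (∫ a : EuclideanSpace ℝ (Fin d) × EuclideanSpace ℝ (Fin d),
        1 * w a.2 ∂((volume.restrict K).prod (volume.restrict K)))
        = (∫ _x in K, (1 : ℝ)) * (∫ y in K, w y) := integral_prod_mul (fun _ => (1 : ℝ)) w
    have e3 : (∫ a : EuclideanSpace ℝ (Fin d) × EuclideanSpace ℝ (Fin d),
        (inner ℝ ξ a.1 : ℝ) * 1 ∂((volume.restrict K).prod (volume.restrict K)))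
        = (∫ x in K, (inner ℝ ξ x : ℝ)) * (∫ _y in K, (1 : ℝ)) :=
      integral_prod_mul (fun x => (inner ℝ ξ x : ℝ)) (fun _ => (1 : ℝ))
    have e4 : (∫ a : EuclideanSpace ℝ (Fin d) × EuclideanSpace ℝ (Fin d),
        1 * (inner ℝ ξ a.2 : ℝ) ∂((volume.restrict K).prod (volume.restrict K)))
        = (∫ _x in K, (1 : ℝ)) * (∫ y in K, (inner ℝ ξ y : ℝ)) :=
      integral_prod_mul (fun _ => (1 : ℝ)) (fun y => (inner ℝ ξ y : ℝ))
    rw [he, integral_add hA hB, integral_sub hw1 hw2,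
      integral_sub hi1 hi2, e1, e2, e3, e4]
    ring
  have hMuniv : (((volume.restrict K).prod (volume.restrict K)) Set.univ).toReal = m * m := by
    rw [← Set.univ_prod_univ, Measure.prod_prod, Measure.restrict_apply_univ,
      ENNReal.toReal_mul]
  -- Jensen per shift
  have hJensen : ∀ a : ℝ, m ^ 2 * a ^ 2 ≤ ∫ q in K ×ˢ K,
      ((w q.1 - w q.2 + (inner ℝ ξ (q.1 - q.2) : ℝ)) - a) ^ 2 := by
    intro a
    have hexp : (fun q : EuclideanSpace ℝ (Fin d) × EuclideanSpace ℝ (Fin d) =>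
        ((w q.1 - w q.2 + (inner ℝ ξ (q.1 - q.2) : ℝ)) - a) ^ 2)
        = fun q => ((w q.1 - w q.2 + (inner ℝ ξ (q.1 - q.2) : ℝ)) - a) ^ 2 := rfl
    have hha : Integrable (fun q : EuclideanSpace ℝ (Fin d) × EuclideanSpace ℝ (Fin d) =>
        (w q.1 - w q.2 + (inner ℝ ξ (q.1 - q.2) : ℝ)) - a)
        ((volume.restrict K).prod (volume.restrict K)) := hg.sub (integrable_const a)
    have hha2 : Integrable (fun q : EuclideanSpace ℝ (Fin d) × EuclideanSpace ℝ (Fin d) =>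
        ((w q.1 - w q.2 + (inner ℝ ξ (q.1 - q.2) : ℝ)) - a) ^ 2)
        ((volume.restrict K).prod (volume.restrict K)) := by
      have he : (fun q : EuclideanSpace ℝ (Fin d) × EuclideanSpace ℝ (Fin d) =>
          ((w q.1 - w q.2 + (inner ℝ ξ (q.1 - q.2) : ℝ)) - a) ^ 2)
          = fun q => ((w q.1 - w q.2 + (inner ℝ ξ (q.1 - q.2) : ℝ)) ^ 2
            - 2 * a * (w q.1 - w q.2 + (inner ℝ ξ (q.1 - q.2) : ℝ))) + a ^ 2 := by
        funext q; ring
      rw [he]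
      exact (hfKK'.sub (hg.const_mul _)).add (integrable_const _)
    have hJ := myJensen ((volume.restrict K).prod (volume.restrict K)) _ hha hha2
    have hI1 : (∫ q, ((w q.1 - w q.2 + (inner ℝ ξ (q.1 - q.2) : ℝ)) - a)
        ∂((volume.restrict K).prod (volume.restrict K))) = -(a * (m * m)) := by
      rw [integral_sub hg (integrable_const a), hmean, integral_const, smul_eq_mul, measureReal_def, hMuniv]
      ring
    rw [hI1, hMuniv] at hJ
    have hgoal : (∫ q in K ×ˢ K, ((w q.1 - w q.2 + (inner ℝ ξ (q.1 - q.2) : ℝ)) - a) ^ 2)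
        = ∫ q, ((w q.1 - w q.2 + (inner ℝ ξ (q.1 - q.2) : ℝ)) - a) ^ 2
          ∂((volume.restrict K).prod (volume.restrict K)) := by
      rw [hprodKK]
    rw [hgoal]
    nlinarith [hJ, hmpos, mul_pos hmpos hmpos]
  -- translation per shift
  have hshift : ∀ k ∈ F, (∫ p in K ×ˢ (lat d k +ᵥ K),
        (w p.1 - w p.2 + (inner ℝ ξ (p.1 - p.2) : ℝ)) ^ 2)
      = ∫ q in K ×ˢ K,
        ((w q.1 - w q.2 + (inner ℝ ξ (q.1 - q.2) : ℝ)) - (inner ℝ ξ (lat d k) : ℝ)) ^ 2 := by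
    intro k hk
    have hInt : IntegrableOn
        (fun p : EuclideanSpace ℝ (Fin d) × EuclideanSpace ℝ (Fin d) =>
          (w p.1 - w p.2 + (inner ℝ ξ (p.1 - p.2) : ℝ)) ^ 2) (K ×ˢ (lat d k +ᵥ K)) :=
      hfA.mono_set (hpiece_sub k hk)
    have hInt2 : IntegrableOn
        (fun q : EuclideanSpace ℝ (Fin d) × EuclideanSpace ℝ (Fin d) =>
          ((w q.1 - w q.2 + (inner ℝ ξ (q.1 - q.2) : ℝ)) - (inner ℝ ξ (lat d k) : ℝ)) ^ 2)
        (K ×ˢ K) := by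
      rw [IntegrableOn, hprodKK]
      have he : (fun q : EuclideanSpace ℝ (Fin d) × EuclideanSpace ℝ (Fin d) =>
          ((w q.1 - w q.2 + (inner ℝ ξ (q.1 - q.2) : ℝ)) - (inner ℝ ξ (lat d k) : ℝ)) ^ 2)
          = fun q => ((w q.1 - w q.2 + (inner ℝ ξ (q.1 - q.2) : ℝ)) ^ 2
            - 2 * (inner ℝ ξ (lat d k) : ℝ) * (w q.1 - w q.2 + (inner ℝ ξ (q.1 - q.2) : ℝ)))
            + (inner ℝ ξ (lat d k) : ℝ) ^ 2 := by
        funext q; ring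
      rw [he]
      exact (hfKK'.sub (hg.const_mul _)).add (integrable_const _)
    rw [show (∫ p in K ×ˢ (lat d k +ᵥ K),
        (w p.1 - w p.2 + (inner ℝ ξ (p.1 - p.2) : ℝ)) ^ 2)
        = ∫ p in K ×ˢ (lat d k +ᵥ K),
        (w p.1 - w p.2 + (inner ℝ ξ (p.1 - p.2) : ℝ)) ^ 2
          ∂(volume.prod volume) from by rw [← Measure.volume_eq_prod]]
    rw [show (∫ q in K ×ˢ K,
        ((w q.1 - w q.2 + (inner ℝ ξ (q.1 - q.2) : ℝ)) - (inner ℝ ξ (lat d k) : ℝ)) ^ 2)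
        = ∫ q in K ×ˢ K,
        ((w q.1 - w q.2 + (inner ℝ ξ (q.1 - q.2) : ℝ)) - (inner ℝ ξ (lat d k) : ℝ)) ^ 2
          ∂(volume.prod volume) from by rw [← Measure.volume_eq_prod]]
    have hInt' : IntegrableOn
        (fun p : EuclideanSpace ℝ (Fin d) × EuclideanSpace ℝ (Fin d) =>
          (w p.1 - w p.2 + (inner ℝ ξ (p.1 - p.2) : ℝ)) ^ 2) (K ×ˢ (lat d k +ᵥ K))
        (volume.prod volume) := by rwa [← Measure.volume_eq_prod]
    have hInt2' : IntegrableOn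
        (fun q : EuclideanSpace ℝ (Fin d) × EuclideanSpace ℝ (Fin d) =>
          ((w q.1 - w q.2 + (inner ℝ ξ (q.1 - q.2) : ℝ)) - (inner ℝ ξ (lat d k) : ℝ)) ^ 2)
        (K ×ˢ K) (volume.prod volume) := by rwa [← Measure.volume_eq_prod]
    rw [setIntegral_prod _ hInt', setIntegral_prod _ hInt2']
    congr 1
    funext x
    rw [setIntegral_vadd_set hKmeas]
    congr 1
    funext y
    have hw : w (lat d k + y) = w y := by rw [add_comm]; exact hper y k
    have hx : x - (lat d k + y) = (x - y) - lat d k := by abel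
    rw [hw, hx, inner_sub_right]
    ring
  -- assemble
  calc m ^ 2 * ∑' k : {k : Fin d → ℤ // ‖lat d k‖ < (1 - η) * R},
        (inner ℝ ξ (lat d k.1) : ℝ) ^ 2
      = ∑ k ∈ t, m ^ 2 * (inner ℝ ξ (lat d k) : ℝ) ^ 2 := by rw [htsum, Finset.mul_sum]
    _ ≤ ∑ k ∈ t, ∫ p in K ×ˢ (lat d k +ᵥ K),
        (w p.1 - w p.2 + (inner ℝ ξ (p.1 - p.2) : ℝ)) ^ 2 := by
        refine Finset.sum_le_sum fun k hk => ?_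
        rw [hshift k (hFfin.mem_toFinset.1 hk)]
        exact hJensen _
    _ = ∫ p in ⋃ k ∈ t, K ×ˢ (lat d k +ᵥ K),
        (w p.1 - w p.2 + (inner ℝ ξ (p.1 - p.2) : ℝ)) ^ 2 := step2.symm
    _ ≤ ∫ p in A, (w p.1 - w p.2 + (inner ℝ ξ (p.1 - p.2) : ℝ)) ^ 2 := step1
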